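/- Let X be a metric space and μ a Borel probability measure on X. Then the μ-essential infimum of the lower local dimension d̲_μ(x) equals dim_H^−(μ), and the μ-essential supremum of d̲_μ(x) equals dim_H^+(μ); in particular dim_H^−(μ) ≤ dim_H^+(μ). -/

import Mathlib

open MeasureTheory Filter Topology Metric Set
open scoped ENNReal NNReal

section Defs

variable {X : Type*} [MetricSpace X] [MeasurableSpace X]

/-- The topological support of a Borel measure on a metric space: the set of points all of whose
balls have positive measure. -/
def msupp (μ : Measure X) : Set X := {x : X | ∀ ε > 0, 0 < μ (ball x ε)}

/-- The energy function `I_μ(q, ε) = ∫_{supp μ} μ(B(x,ε))^(q-1) dμ(x)`. -/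
noncomputable def energyI (μ : Measure X) (q ε : ℝ) : ℝ :=
  ∫ x in msupp μ, (μ (ball x ε)).toReal ^ (q - 1) ∂μ

/-- The lower `q`-generalized fractal dimension
`D⁻_μ(q) = liminf_{ε→0⁺} log I_μ(q,ε) / ((q-1) log ε)` (as an extended real number). -/
noncomputable def Dlower (μ : Measure X) (q : ℝ) : EReal :=
  liminf (fun ε : ℝ =>
    ((Real.log (energyI μ q ε) / ((q - 1) * Real.log ε) : ℝ) : EReal)) (𝓝[>] (0 : ℝ))

/-- The upper `q`-generalized fractal dimension
`D⁺_μ(q) = limsup_{ε→0⁺} log I_μ(q,ε) / ((q-1) log ε)` (as an extended real number). -/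
noncomputable def Dupper (μ : Measure X) (q : ℝ) : EReal :=
  limsup (fun ε : ℝ =>
    ((Real.log (energyI μ q ε) / ((q - 1) * Real.log ε) : ℝ) : EReal)) (𝓝[>] (0 : ℝ))

/-- `∫_{supp μ} log μ(B(x,ε)) dμ(x)`, the numerator in the entropy dimension. -/
noncomputable def entNum (μ : Measure X) (ε : ℝ) : ℝ :=
  ∫ x in msupp μ, Real.log (μ (ball x ε)).toReal ∂μ

/-- The lower entropy dimension
`D⁻_μ(1) = liminf_{ε→0⁺} (∫_{supp μ} log μ(B(x,ε)) dμ(x)) / log ε`. -/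
noncomputable def D1lower (μ : Measure X) : EReal :=
  liminf (fun ε : ℝ => ((entNum μ ε / Real.log ε : ℝ) : EReal)) (𝓝[>] (0 : ℝ))

/-- The upper entropy dimension
`D⁺_μ(1) = limsup_{ε→0⁺} (∫_{supp μ} log μ(B(x,ε)) dμ(x)) / log ε`. -/
noncomputable def D1upper (μ : Measure X) : EReal :=
  limsup (fun ε : ℝ => ((entNum μ ε / Real.log ε : ℝ) : EReal)) (𝓝[>] (0 : ℝ))

/-- A measure is `T`-invariant if `μ(T⁻¹ s) = μ s` for every measurable `s`. -/
def IsInvariantMeasure (T : X → X) (μ : Measure X) : Prop :=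
  ∀ s : Set X, MeasurableSet s → μ (T ⁻¹' s) = μ s

/-- `M(T)`: the set of `T`-invariant Borel probability measures on `X`. -/
def invSet (T : X → X) : Set (ProbabilityMeasure X) :=
  {μ : ProbabilityMeasure X | IsInvariantMeasure T μ.toMeasure}

/-- A `T`-periodic measure: `μ = (1/k) ∑_{i<k} δ_{T^i x}` for a `T`-periodic point `x`
of period `k`. -/
def IsPeriodicMeasure (T : X → X) (μ : ProbabilityMeasure X) : Prop :=
  ∃ (x : X) (k : ℕ), 0 < k ∧ T^[k] x = x ∧
    μ.toMeasure = (k : ℝ≥0∞)⁻¹ • ∑ i ∈ Finset.range k, Measure.dirac (T^[i] x)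

/-- The upper Hausdorff dimension of a measure:
`dim_H^+(μ) = inf {dimH E | E Borel, μ(X \ E) = 0}`. -/
noncomputable def dimHplus (μ : Measure X) : ℝ≥0∞ :=
  ⨅ (E : Set X) (_ : MeasurableSet E) (_ : μ Eᶜ = 0), dimH E

/-- The lower Hausdorff dimension of a measure:
`dim_H^-(μ) = inf {dimH E | E Borel, μ(E) > 0}`. -/
noncomputable def dimHminus (μ : Measure X) : ℝ≥0∞ :=
  ⨅ (E : Set X) (_ : MeasurableSet E) (_ : 0 < μ E), dimH E

/-- The return time `τ_s(x) = inf {k ≥ 1 | T^k x ∈ B(x,s)}`. -/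
noncomputable def tauRet (T : X → X) (s : ℝ) (x : X) : ℕ :=
  sInf {k : ℕ | 0 < k ∧ T^[k] x ∈ ball x s}

/-- The lower recurrence rate `R̲(x) = liminf_{s→0⁺} log τ_s(x) / (-log s)`. -/
noncomputable def Rlower (T : X → X) (x : X) : EReal :=
  liminf (fun s : ℝ =>
    ((Real.log (tauRet T s x : ℝ) / (-Real.log s) : ℝ) : EReal)) (𝓝[>] (0 : ℝ))

open Classical in
/-- The lower local dimension `d̲_μ(x) = liminf_{ε→0⁺} log μ(B(x,ε)) / log ε` when all balls
around `x` have positive measure, and `+∞` otherwise. -/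
noncomputable def dLoc (μ : Measure X) (x : X) : EReal :=
  if (∀ ε > 0, 0 < μ (ball x ε)) then
    liminf (fun ε : ℝ =>
      ((Real.log (μ (ball x ε)).toReal / Real.log ε : ℝ) : EReal)) (𝓝[>] (0 : ℝ))
  else ⊤

/-- The auxiliary continuous kernel `f^ε_x(y)`: equal to `1` if `dist x y ≤ ε`, to
`2 - dist x y / ε` if `ε ≤ dist x y ≤ 2ε`, and to `0` if `dist x y ≥ 2ε`. -/
noncomputable def fker (ε : ℝ) (x y : X) : ℝ :=
  if dist x y ≤ ε then 1 else if dist x y ≤ 2 * ε then 2 - dist x y / ε else 0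

/-- `f_ε(μ, x) = ∫ f^ε_x(y) dμ(y)`. -/
noncomputable def feps (ε : ℝ) (μ : Measure X) (x : X) : ℝ := ∫ y, fker ε x y ∂μ

/-- `G` is a finite covering of `X` by open balls of radius `ε` (given by its finite set of
centers). -/
def IsBallCover (ε : ℝ) (G : Finset X) : Prop := (⋃ x ∈ G, ball x ε) = univ

/-- `S_μ(s,ε) = inf_G ∑_{x ∈ G} μ(B(x,ε))^s`, the infimum running over all finite coverings of
`X` by balls of radius `ε`. -/
noncomputable def Sfun (μ : Measure X) (s ε : ℝ) : ℝ :=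
  ⨅ G : {H : Finset X // IsBallCover ε H}, ∑ x ∈ G.val, (μ (ball x ε)).toReal ^ s

/-- `W_μ(s,ε) = inf_G ∑_{x ∈ G} f_ε(μ,x)^s`, the infimum running over all finite coverings of
`X` by balls of radius `ε`. -/
noncomputable def Wfun (μ : Measure X) (s ε : ℝ) : ℝ :=
  ⨅ G : {H : Finset X // IsBallCover ε H}, ∑ x ∈ G.val, (feps ε μ x) ^ s

/-- The regularized energy function `J_μ(q,ε) = ∫ f_ε(μ,x)^(q-1) dμ(x)`. -/
noncomputable def Jfun (μ : Measure X) (q ε : ℝ) : ℝ :=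
  ∫ x, (feps ε μ x) ^ (q - 1) ∂μ

end Defs

section Shift

variable {M : Type*} [MetricSpace M]

/-- The "cylinder ball" `B^n(x,ε) = {y | d(x_i, y_i) < ε for all |i| ≤ n}` in `M^ℤ`. -/
def cylBall (n : ℕ) (x : ℤ → M) (ε : ℝ) : Set (ℤ → M) :=
  {y : ℤ → M | ∀ i : ℤ, |i| ≤ (n : ℤ) → dist (x i) (y i) < ε}

/-- For `ε ∈ (0,1)`, the largest integer `n ≥ 0` with `ε < 1/(n²+1)`. -/
noncomputable def nZero (ε : ℝ) : ℕ := sSup {n : ℕ | ε < 1 / ((n : ℝ) ^ 2 + 1)}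

/-- The modified energy function `I^n_μ(q,ε) = ∫ μ(B^n(x,ε))^(q-1) dμ(x)`. -/
noncomputable def Icyl [MeasurableSpace (ℤ → M)] (μ : Measure (ℤ → M)) (n : ℕ) (q ε : ℝ) :
    ℝ :=
  ∫ x, (μ (cylBall n x ε)).toReal ^ (q - 1) ∂μ

end Shift



section AuxProof

variable {X : Type*} [MetricSpace X] [MeasurableSpace X]



lemma aux_lt_rpow {c ε m : ℝ} (hε0 : 0 < ε) (hε1 : ε < 1) (hm : 0 < m)
    (h : c < Real.log m / Real.log ε) : m < ε ^ c := by
  have hl : Real.log ε < 0 := Real.log_neg hε0 hε1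
  have h2 : Real.log m < c * Real.log ε := (lt_div_iff_of_neg hl).mp h
  rw [← Real.log_rpow hε0] at h2
  exact (Real.log_lt_log_iff hm (Real.rpow_pos_of_pos hε0 c)).mp h2

lemma aux_rpow_lt {c ε m : ℝ} (hε0 : 0 < ε) (hε1 : ε < 1) (hm : 0 < m)
    (h : Real.log m / Real.log ε < c) : ε ^ c < m := by
  have hl : Real.log ε < 0 := Real.log_neg hε0 hε1
  have h2 : c * Real.log ε < Real.log m := by
    have := (div_lt_iff_of_neg hl).mp h
    linarith [this]
  rw [← Real.log_rpow hε0] at h2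
  exact (Real.log_lt_log_iff (Real.rpow_pos_of_pos hε0 c) hm).mp h2

lemma aux_ediam_closedBall (x : X) {R : ℝ} (hR : 0 ≤ R) :
    EMetric.diam (closedBall x R) ≤ ENNReal.ofReal (2 * R) := by
  apply EMetric.diam_le
  intro y hy z hz
  rw [edist_dist]
  apply ENNReal.ofReal_le_ofReal
  calc dist y z ≤ dist y x + dist x z := dist_triangle _ _ _
    _ ≤ R + R := add_le_add (mem_closedBall.mp hy) (mem_closedBall'.mp hz)
    _ = 2 * R := by ring

lemma dLoc_nonneg (μ : Measure X) [IsProbabilityMeasure μ] (x : X) : 0 ≤ dLoc μ x := by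
  unfold dLoc
  split_ifs with hpos
  · apply Filter.le_liminf_of_le (by isBoundedDefault)
    filter_upwards [Ioo_mem_nhdsGT_of_mem (Set.left_mem_Ico.mpr one_pos)] with ε hε
    have hl : Real.log ε < 0 := Real.log_neg hε.1 hε.2
    have hm : Real.log (μ (ball x ε)).toReal ≤ 0 := by
      apply Real.log_nonpos (ENNReal.toReal_nonneg)
      exact ENNReal.toReal_le_of_le_ofReal one_pos.le (by simpa using prob_le_one)
    have : (0:ℝ) ≤ Real.log (μ (ball x ε)).toReal / Real.log ε :=
      div_nonneg_iff.mpr (Or.inr ⟨hm, hl.le⟩)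
    exact_mod_cast EReal.coe_nonneg.mpr this
  · exact le_top

/-- From a strict lower bound on the lower local dimension, get a uniform Frostman-type
upper bound for small balls. -/
lemma exists_delta_of_lt_dLoc (μ : Measure X) [IsProbabilityMeasure μ] {c : ℝ} {x : X}
    (h : (c : EReal) < dLoc μ x) :
    ∃ δ > 0, ∀ ε : ℝ, 0 < ε → ε ≤ δ → μ (ball x ε) ≤ ENNReal.ofReal (ε ^ c) := by
  unfold dLoc at h
  split_ifs at h with hpos
  · have hev := eventually_lt_of_lt_liminf h
    have hev2 : ∀ᶠ ε in 𝓝[>] (0:ℝ), ε ∈ Ioo (0:ℝ) 1 :=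
      eventually_of_mem (Ioo_mem_nhdsGT_of_mem (Set.left_mem_Ico.mpr one_pos)) (fun _ h => h)
    obtain ⟨u, hu, hsub⟩ := mem_nhdsGT_iff_exists_Ioo_subset.mp (hev.and hev2)
    have hu' : (0:ℝ) < u := hu
    refine ⟨min (u/2) (1/2), by positivity, fun ε hε0 hεδ => ?_⟩
    have hmem : ε ∈ Ioo (0:ℝ) u := by
      constructor
      · exact hε0
      · calc ε ≤ min (u/2) (1/2) := hεδ
          _ ≤ u/2 := min_le_left _ _
          _ < u := by linarith [mem_Ioi.mp hu]
    obtain ⟨hc, hε1⟩ := hsub hmem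
    rw [EReal.coe_lt_coe_iff] at hc
    have hm : 0 < (μ (ball x ε)).toReal :=
      ENNReal.toReal_pos (hpos ε hε0).ne' (measure_ne_top _ _)
    have := aux_lt_rpow hε0 hε1.2 hm hc
    rw [← ENNReal.ofReal_toReal (measure_ne_top μ (ball x ε))]
    exact ENNReal.ofReal_le_ofReal this.le
  · push_neg at hpos
    obtain ⟨δ, hδ0, hδ⟩ := hpos
    refine ⟨δ, hδ0, fun ε hε0 hεδ => ?_⟩
    have : μ (ball x ε) = 0 := le_antisymm (le_trans (measure_mono (ball_subset_ball hεδ))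
      (le_of_not_gt (by simpa using hδ))) (zero_le)
    simp [this]


variable [BorelSpace X]



/-- Mass distribution principle. -/
lemma meas_le_hausdorff (μ : Measure X) [IsProbabilityMeasure μ] {c δ : ℝ}
    (hc : 0 < c) (hδ : 0 < δ) {S : Set X}
    (hS : ∀ x ∈ S, ∀ ε : ℝ, 0 < ε → ε ≤ δ → μ (ball x ε) ≤ ENNReal.ofReal (ε ^ c)) :
    μ S ≤ μH[c] S := by
  rw [MeasureTheory.Measure.hausdorffMeasure_apply]
  have hr0 : (0:ℝ≥0∞) < ENNReal.ofReal (δ/2) := ENNReal.ofReal_pos.mpr (by linarith)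
  refine le_iSup₂_of_le (ENNReal.ofReal (δ/2)) hr0 ?_
  refine le_iInf fun t => le_iInf fun hcov => le_iInf fun hdiam => ?_
  have key : ∀ n, μ (t n ∩ S) ≤ ⨆ _ : (t n).Nonempty, EMetric.diam (t n) ^ c := by
    intro n
    rcases Set.eq_empty_or_nonempty (t n ∩ S) with he | hne
    · simp [he]
    · obtain ⟨x, hxt, hxS⟩ := hne
      rw [iSup_pos ⟨x, hxt⟩]
      have hDle : EMetric.diam (t n) ≤ ENNReal.ofReal (δ/2) := hdiam n
      have hDfin : EMetric.diam (t n) ≠ ⊤ := ne_top_of_le_ne_top ENNReal.ofReal_ne_top hDle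
      obtain ⟨d0, hd0def⟩ : ∃ d0 : ℝ, d0 = (EMetric.diam (t n)).toReal := ⟨_, rfl⟩
      have hd0nn : 0 ≤ d0 := hd0def ▸ ENNReal.toReal_nonneg
      have hd0half : d0 ≤ δ / 2 := by
        rw [hd0def]
        have := ENNReal.toReal_mono ENNReal.ofReal_ne_top hDle
        rwa [ENNReal.toReal_ofReal (by linarith : (0:ℝ) ≤ δ/2)] at this
      have hbound : ∀ k : ℕ, μ (t n ∩ S) ≤ ENNReal.ofReal ((d0 + (δ/2) / (k+1)) ^ c) := by
        intro k
        have hk : (0:ℝ) < (k:ℝ) + 1 := by positivity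
        have hq0 : (0:ℝ) < (δ/2) / ((k:ℝ)+1) := by positivity
        have hqle : (δ/2) / ((k:ℝ)+1) ≤ δ/2 := div_le_self (by linarith) (by linarith)
        have hε0 : 0 < d0 + (δ/2) / ((k:ℝ)+1) := by linarith
        have hεδ : d0 + (δ/2) / ((k:ℝ)+1) ≤ δ := by linarith
        have hsub : t n ⊆ ball x (d0 + (δ/2) / ((k:ℝ)+1)) := by
          intro y hy
          have h1 : edist x y ≤ EMetric.diam (t n) := EMetric.edist_le_diam_of_mem hxt hy
          have h2 : dist x y ≤ d0 := by
            rw [dist_edist, hd0def]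
            exact ENNReal.toReal_mono hDfin h1
          have h3 : dist y x < d0 + (δ/2) / ((k:ℝ)+1) := by
            rw [dist_comm]; linarith
          exact mem_ball.mpr h3
        calc μ (t n ∩ S) ≤ μ (ball x (d0 + (δ/2) / ((k:ℝ)+1))) :=
              measure_mono (fun y hy => hsub hy.1)
          _ ≤ ENNReal.ofReal ((d0 + (δ/2) / ((k:ℝ)+1)) ^ c) := hS x hxS _ hε0 hεδ
      have htend : Tendsto (fun k : ℕ => ENNReal.ofReal ((d0 + (δ/2) / (k+1)) ^ c))
          atTop (𝓝 (ENNReal.ofReal (d0 ^ c))) := by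
        apply ENNReal.tendsto_ofReal
        have h1 : Tendsto (fun k : ℕ => d0 + (δ/2) / ((k:ℝ)+1)) atTop (𝓝 d0) := by
          have h2 := tendsto_one_div_add_atTop_nhds_zero_nat.const_mul (δ/2)
          have h3 : Tendsto (fun k : ℕ => d0 + (δ/2) * (1 / ((k:ℝ)+1))) atTop
              (𝓝 (d0 + (δ/2) * 0)) := tendsto_const_nhds.add h2
          simpa [mul_one_div, div_eq_mul_inv] using h3
        exact ((Real.continuousAt_rpow_const d0 c (Or.inr hc.le)).tendsto).comp h1
      have hlim : μ (t n ∩ S) ≤ ENNReal.ofReal (d0 ^ c) :=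
        ge_of_tendsto htend (Filter.Eventually.of_forall hbound)
      refine hlim.trans ?_
      rcases eq_or_lt_of_le hd0nn with h0 | h0
      · have hD0 : EMetric.diam (t n) = 0 := by
          rw [← ENNReal.ofReal_toReal hDfin, ← hd0def, ← h0]; simp
        rw [hD0, ← h0, ENNReal.zero_rpow_of_pos hc, Real.zero_rpow hc.ne', ENNReal.ofReal_zero]
      · rw [← ENNReal.ofReal_rpow_of_pos h0, hd0def, ENNReal.ofReal_toReal hDfin]
  calc μ S ≤ μ (⋃ n, t n ∩ S) := by
        apply measure_mono
        intro x hx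
        obtain ⟨_, ⟨n, rfl⟩, hn⟩ := hcov hx
        exact mem_iUnion.mpr ⟨n, hn, hx⟩
    _ ≤ ∑' n, μ (t n ∩ S) := measure_iUnion_le _
    _ ≤ ∑' n, ⨆ _ : (t n).Nonempty, EMetric.diam (t n) ^ c := ENNReal.tsum_le_tsum key


/-- Covering lemma: the set of points with lower local dimension `< d'` has
`μH[d'']`-measure zero for every `d'' > d'`. -/
lemma hausdorff_null_of_dLoc_lt (μ : Measure X) [IsProbabilityMeasure μ] {d' d'' : ℝ}
    (hd' : 0 < d') (hdd : d' < d'') :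
    μH[d''] {x | dLoc μ x < (d' : EReal)} = 0 := by
  set A := {x | dLoc μ x < (d' : EReal)} with hA
  -- Step 1: for every `n`, construct a countable disjointed family of balls.
  have key : ∀ n : ℕ, ∃ (u : Set X) (r : X → ℝ), u.Countable ∧
      (∀ b ∈ u, 0 < r b ∧ r b < 1/((n:ℝ)+1) ∧ ENNReal.ofReal (r b ^ d') ≤ μ (ball b (r b))) ∧
      u.PairwiseDisjoint (fun b => closedBall b (r b)) ∧
      A ⊆ ⋃ b ∈ u, closedBall b (5 * r b) := by
    intro n
    have hδn : (0:ℝ) < 1/((n:ℝ)+1) := by positivity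
    have hδn1 : 1/((n:ℝ)+1) ≤ 1 := by
      rw [div_le_one (by positivity)]; simp
    -- choice of radii
    have hchoice : ∀ x ∈ A, ∃ ε : ℝ, 0 < ε ∧ ε < 1/((n:ℝ)+1) ∧
        ENNReal.ofReal (ε ^ d') ≤ μ (ball x ε) := by
      intro x hx
      rw [hA, mem_setOf_eq] at hx
      unfold dLoc at hx
      split_ifs at hx with hpos
      · have hfreq := frequently_lt_of_liminf_lt (by isBoundedDefault) hx
        have hev : ∀ᶠ ε in 𝓝[>] (0:ℝ), ε ∈ Ioo (0:ℝ) (1/((n:ℝ)+1)) :=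
          eventually_of_mem (Ioo_mem_nhdsGT_of_mem (Set.left_mem_Ico.mpr hδn)) (fun _ h => h)
        obtain ⟨ε, hlt, hε0, hε1⟩ := (hfreq.and_eventually hev).exists
        refine ⟨ε, hε0, hε1, ?_⟩
        rw [EReal.coe_lt_coe_iff] at hlt
        have hm : 0 < (μ (ball x ε)).toReal :=
          ENNReal.toReal_pos (hpos ε hε0).ne' (measure_ne_top _ _)
        have := aux_rpow_lt hε0 (lt_of_lt_of_le hε1 hδn1) hm hlt
        rw [← ENNReal.ofReal_toReal (measure_ne_top μ (ball x ε))]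
        exact ENNReal.ofReal_le_ofReal this.le
      · exact absurd hx (not_top_lt)
    classical
    set r : X → ℝ := fun x => if hx : x ∈ A then Classical.choose (hchoice x hx) else 1 with hr
    have hrA : ∀ x (hx : x ∈ A), 0 < r x ∧ r x < 1/((n:ℝ)+1) ∧
        ENNReal.ofReal (r x ^ d') ≤ μ (ball x (r x)) := by
      intro x hx
      simp only [hr, dif_pos hx]
      exact Classical.choose_spec (hchoice x hx)
    obtain ⟨u, huA, hdisj, hcov⟩ :=
      Vitali.exists_disjoint_subfamily_covering_enlargement_closedBall A id r 1
        (fun a ha => le_trans ((hrA a ha).2.1).le hδn1) 5 (by norm_num)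
    have hprops : ∀ b ∈ u, 0 < r b ∧ r b < 1/((n:ℝ)+1) ∧
        ENNReal.ofReal (r b ^ d') ≤ μ (ball b (r b)) := fun b hb => hrA b (huA hb)
    -- countability
    have hcnt : u.Countable := by
      have h1 : Set.Countable {i : ↥u | 0 < μ (closedBall (i:X) (r i))} := by
        apply MeasureTheory.Measure.countable_meas_pos_of_disjoint_iUnion
          (As := fun i : ↥u => closedBall (i:X) (r i))
        · exact fun i => measurableSet_closedBall
        · intro i j hij
          exact hdisj i.2 j.2 (Subtype.coe_injective.ne hij)
      have h2 : {i : ↥u | 0 < μ (closedBall (i:X) (r i))} = Set.univ := by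
        ext i
        simp only [mem_setOf_eq, mem_univ, iff_true]
        exact lt_of_lt_of_le (lt_of_lt_of_le (ENNReal.ofReal_pos.mpr
          (Real.rpow_pos_of_pos (hprops i i.2).1 d'))
          (hprops i i.2).2.2) (measure_mono ball_subset_closedBall)
      rw [h2] at h1
      rw [← Set.countable_coe_iff]
      exact Set.countable_univ_iff.mp h1
    refine ⟨u, r, hcnt, hprops, hdisj, ?_⟩
    intro a ha
    obtain ⟨b, hb, hsub⟩ := hcov a ha
    have : a ∈ closedBall (id a) (r a) := mem_closedBall_self (hrA a ha).1.le
    exact mem_biUnion hb (hsub this)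
  choose u r hcnt hprops hdisj hcov using key
  haveI : ∀ n : ℕ, Countable ↥(u n) := fun n => (hcnt n).to_subtype
  have hbound := MeasureTheory.Measure.hausdorffMeasure_le_liminf_tsum
    (ι := fun n : ℕ => ↥(u n)) d'' A (l := atTop)
    (fun n => ENNReal.ofReal (10 * (1/((n:ℝ)+1))))
    (by
      rw [show (0:ℝ≥0∞) = ENNReal.ofReal (10 * 0) by simp]
      apply ENNReal.tendsto_ofReal
      exact tendsto_one_div_add_atTop_nhds_zero_nat.const_mul 10)
    (fun n i => closedBall (i:X) (5 * r n i))
    (by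
      apply Filter.Eventually.of_forall
      intro n i
      have h1 := (hprops n i i.2).1
      refine le_trans (aux_ediam_closedBall _ (by positivity)) ?_
      apply ENNReal.ofReal_le_ofReal
      have h2 := (hprops n i i.2).2.1
      linarith)
    (by
      apply Filter.Eventually.of_forall
      intro n a ha
      have h3 := hcov n ha
      rw [Set.mem_iUnion₂] at h3
      obtain ⟨b, hb, hmem⟩ := h3
      exact Set.mem_iUnion.mpr ⟨⟨b, hb⟩, hmem⟩)
  -- Step 3: bound each sum.
  have hsum : ∀ n : ℕ, (∑' i : ↥(u n), EMetric.diam (closedBall (i:X) (5 * r n i)) ^ d'')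
      ≤ ENNReal.ofReal ((10 * (1/((n:ℝ)+1))) ^ (d'' - d') * 10 ^ d') := by
    intro n
    have step : ∀ i : ↥(u n), EMetric.diam (closedBall (i:X) (5 * r n i)) ^ d''
        ≤ ENNReal.ofReal ((10 * (1/((n:ℝ)+1))) ^ (d'' - d') * 10 ^ d') * μ (ball (i:X) (r n i)) := by
      intro i
      obtain ⟨hr0, hrlt, hrμ⟩ := hprops n i i.2
      have h10 : (0:ℝ) < 10 * r n i := by linarith
      have e1 : EMetric.diam (closedBall (i:X) (5 * r n i)) ^ d''
          ≤ ENNReal.ofReal ((10 * r n i) ^ d'') := by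
        rw [← ENNReal.ofReal_rpow_of_pos h10]
        apply ENNReal.rpow_le_rpow _ (by linarith)
        refine le_trans (aux_ediam_closedBall _ (by linarith)) ?_
        apply ENNReal.ofReal_le_ofReal; linarith
      refine e1.trans ?_
      have e2 : (10 * r n i) ^ d'' ≤ (10 * (1/((n:ℝ)+1))) ^ (d'' - d') * 10 ^ d' * r n i ^ d' := by
        have : (10 * r n i) ^ d'' = (10 * r n i) ^ (d'' - d') * (10 * r n i) ^ d' := by
          rw [← Real.rpow_add h10]; ring_nf
        have hm1 : (10 * r n i) ^ (d'' - d') ≤ (10 * (1/((n:ℝ)+1))) ^ (d'' - d') := by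
          apply Real.rpow_le_rpow h10.le (by linarith) (by linarith)
        calc (10 * r n i) ^ d'' = (10 * r n i) ^ (d'' - d') * (10 * r n i) ^ d' := this
          _ ≤ (10 * (1/((n:ℝ)+1))) ^ (d'' - d') * (10 * r n i) ^ d' :=
              mul_le_mul_of_nonneg_right hm1 (Real.rpow_nonneg h10.le _)
          _ = (10 * (1/((n:ℝ)+1))) ^ (d'' - d') * (10 ^ d' * r n i ^ d') := by
              rw [Real.mul_rpow (by norm_num) hr0.le]
          _ = (10 * (1/((n:ℝ)+1))) ^ (d'' - d') * 10 ^ d' * r n i ^ d' := by ring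
      calc ENNReal.ofReal ((10 * r n i) ^ d'')
          ≤ ENNReal.ofReal ((10 * (1/((n:ℝ)+1))) ^ (d'' - d') * 10 ^ d' * r n i ^ d') :=
            ENNReal.ofReal_le_ofReal e2
        _ = ENNReal.ofReal ((10 * (1/((n:ℝ)+1))) ^ (d'' - d') * 10 ^ d') *
              ENNReal.ofReal (r n i ^ d') := by
            rw [← ENNReal.ofReal_mul (by positivity)]
        _ ≤ ENNReal.ofReal ((10 * (1/((n:ℝ)+1))) ^ (d'' - d') * 10 ^ d') *
              μ (ball (i:X) (r n i)) := by
            exact mul_le_mul_right hrμ _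
    calc (∑' i : ↥(u n), EMetric.diam (closedBall (i:X) (5 * r n i)) ^ d'')
        ≤ ∑' i : ↥(u n), ENNReal.ofReal ((10 * (1/((n:ℝ)+1))) ^ (d'' - d') * 10 ^ d') *
            μ (ball (i:X) (r n i)) := ENNReal.tsum_le_tsum step
      _ = ENNReal.ofReal ((10 * (1/((n:ℝ)+1))) ^ (d'' - d') * 10 ^ d') *
            ∑' i : ↥(u n), μ (ball (i:X) (r n i)) := ENNReal.tsum_mul_left
      _ ≤ ENNReal.ofReal ((10 * (1/((n:ℝ)+1))) ^ (d'' - d') * 10 ^ d') * μ Set.univ := by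
          apply mul_le_mul_right
          apply MeasureTheory.tsum_measure_le_measure_univ
          · exact fun i => measurableSet_ball.nullMeasurableSet
          · intro i j hij
            exact ((hdisj n i.2 j.2 (Subtype.coe_injective.ne hij)).mono
              ball_subset_closedBall ball_subset_closedBall).aedisjoint
      _ = ENNReal.ofReal ((10 * (1/((n:ℝ)+1))) ^ (d'' - d') * 10 ^ d') := by
          rw [measure_univ, mul_one]
  -- Step 4: the bound tends to zero.
  have htend : Tendsto (fun n : ℕ => ENNReal.ofReal ((10 * (1/((n:ℝ)+1))) ^ (d'' - d') * 10 ^ d'))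
      atTop (𝓝 0) := by
    have h0 : Tendsto (fun n : ℕ => 10 * (1/((n:ℝ)+1))) atTop (𝓝 0) := by
      simpa using (tendsto_one_div_add_atTop_nhds_zero_nat (𝕜 := ℝ)).const_mul 10
    have h1 : Tendsto (fun n : ℕ => (10 * (1/((n:ℝ)+1))) ^ (d'' - d')) atTop (𝓝 0) := by
      have hc := (Real.continuousAt_rpow_const 0 (d'' - d') (Or.inr (by linarith))).tendsto
      have := hc.comp h0
      simpa [Function.comp_def, Real.zero_rpow (by linarith : d'' - d' ≠ 0)] using this
    have h2 : Tendsto (fun n : ℕ => (10 * (1/((n:ℝ)+1))) ^ (d'' - d') * 10 ^ d') atTop (𝓝 0) := by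
      simpa using h1.mul_const ((10:ℝ) ^ d')
    rw [show (0:ℝ≥0∞) = ENNReal.ofReal 0 by simp]
    exact ENNReal.tendsto_ofReal h2
  refine le_antisymm ?_ (zero_le)
  refine hbound.trans ?_
  calc liminf (fun n : ℕ => ∑' i : ↥(u n), EMetric.diam (closedBall (i:X) (5 * r n i)) ^ d'') atTop
      ≤ liminf (fun n : ℕ =>
          ENNReal.ofReal ((10 * (1/((n:ℝ)+1))) ^ (d'' - d') * 10 ^ d')) atTop := by
        apply Filter.liminf_le_liminf (Filter.Eventually.of_forall hsum)
    _ = 0 := htend.liminf_eq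


lemma core_le_dimH (μ : Measure X) [IsProbabilityMeasure μ] {c : ℝ} (hc : 0 < c) {E : Set X}
    (hpos : 0 < μ (E ∩ {x | (c : EReal) < dLoc μ x})) : ENNReal.ofReal c ≤ dimH E := by
  set F := E ∩ {x | (c : EReal) < dLoc μ x} with hF
  set G : ℕ → Set X := fun m => {x ∈ F | ∀ ε : ℝ, 0 < ε → ε ≤ 1/((m:ℝ)+1) →
    μ (ball x ε) ≤ ENNReal.ofReal (ε ^ c)} with hG
  have hsub : F ⊆ ⋃ m : ℕ, G m := by
    intro x hx
    obtain ⟨δ, hδ0, hδ⟩ := exists_delta_of_lt_dLoc μ hx.2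
    obtain ⟨m, hm⟩ := exists_nat_one_div_lt hδ0
    exact mem_iUnion.mpr ⟨m, hx, fun ε hε0 hεle => hδ ε hε0 (le_trans hεle hm.le)⟩
  have hex : ∃ m : ℕ, 0 < μ (G m) := by
    by_contra h
    push_neg at h
    have hz : ∀ m, μ (G m) = 0 := fun m => le_antisymm (h m) (zero_le)
    have : μ F = 0 := le_antisymm (le_trans (measure_mono hsub)
      (le_trans (measure_iUnion_le _) (by simp [hz]))) (zero_le)
    exact absurd this hpos.ne'
  obtain ⟨m, hm⟩ := hex
  have hδm : (0:ℝ) < 1/((m:ℝ)+1) := by positivity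
  have hH := meas_le_hausdorff μ hc hδm (S := G m) (fun x hx => hx.2)
  have hne : μH[c] (G m) ≠ 0 := (lt_of_lt_of_le hm hH).ne'
  have hcoe : ((c.toNNReal : ℝ) : ℝ) = c := Real.coe_toNNReal c hc.le
  have hle : (c.toNNReal : ℝ≥0∞) ≤ dimH (G m) := by
    apply le_dimH_of_hausdorffMeasure_ne_zero (d := c.toNNReal)
    rwa [hcoe]
  have hofReal : ENNReal.ofReal c = (c.toNNReal : ℝ≥0∞) := rfl
  rw [hofReal]
  exact le_trans hle (dimH_mono (fun x hx => hx.1.1))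

end AuxProof

/-- For a Borel probability measure `μ` on a metric space `X`, the
`μ`-essential infimum of the lower local dimension equals `dim_H⁻(μ)`, its `μ`-essential
supremum equals `dim_H⁺(μ)`, and in particular `dim_H⁻(μ) ≤ dim_H⁺(μ)`. -/
theorem statement6 {X : Type*} [MetricSpace X] [MeasurableSpace X] [BorelSpace X]
    (μ : Measure X) [IsProbabilityMeasure μ] :
    essInf (dLoc μ) μ = ((dimHminus μ : ℝ≥0∞) : EReal) ∧
    essSup (dLoc μ) μ = ((dimHplus μ : ℝ≥0∞) : EReal) ∧
    dimHminus μ ≤ dimHplus μ := by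
  haveI : (ae μ).NeBot := ae_neBot.mpr (IsProbabilityMeasure.ne_zero μ)
  have hEIdef : essInf (dLoc μ) μ = liminf (dLoc μ) (ae μ) := rfl
  have hESdef : essSup (dLoc μ) μ = limsup (dLoc μ) (ae μ) := rfl
  have hEI0 : (0 : EReal) ≤ essInf (dLoc μ) μ := by
    rw [hEIdef]
    exact Filter.le_liminf_of_le (by isBoundedDefault)
      (Filter.Eventually.of_forall (dLoc_nonneg μ))
  have hIleS : essInf (dLoc μ) μ ≤ essSup (dLoc μ) μ := by
    rw [hEIdef, hESdef]; exact liminf_le_limsup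
  have hES0 : (0 : EReal) ≤ essSup (dLoc μ) μ := le_trans hEI0 hIleS
  have hcast : ∀ {c : ℝ}, 0 ≤ c → ((ENNReal.ofReal c : ℝ≥0∞) : EReal) = (c : EReal) := by
    intro c h
    rw [EReal.coe_ennreal_ofReal, max_eq_left h]
  have hzero : ((0:ℝ) : EReal) = (0 : EReal) := rfl
  -- claim A : coe (dimHminus) ≤ essInf
  have claimA : ((dimHminus μ : ℝ≥0∞) : EReal) ≤ essInf (dLoc μ) μ := by
    by_contra hlt
    push_neg at hlt
    obtain ⟨c, hc1, hc2⟩ := EReal.exists_between_coe_real hlt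
    obtain ⟨c₂, hc3, hc4⟩ := EReal.exists_between_coe_real hc2
    have hc0 : (0:ℝ) < c := by
      have h := lt_of_le_of_lt hEI0 hc1
      rw [← hzero, EReal.coe_lt_coe_iff] at h
      exact h
    have hcc2 : c < c₂ := EReal.coe_lt_coe_iff.mp hc3
    have hfreq : ∃ᶠ x in ae μ, dLoc μ x < (c : EReal) := by
      rw [hEIdef] at hc1
      exact frequently_lt_of_liminf_lt (by isBoundedDefault) hc1
    have hA0 : μ {x | dLoc μ x < (c : EReal)} ≠ 0 := by
      intro h0
      have hev : ∀ᵐ x ∂μ, ¬ (dLoc μ x < (c : EReal)) := by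
        rw [ae_iff]; simpa using h0
      exact hfreq hev
    have hnull := hausdorff_null_of_dLoc_lt μ hc0 hcc2
    obtain ⟨B, hAB, hBmeas, hB0⟩ :=
      MeasureTheory.exists_measurable_superset (μH[c₂]) {x | dLoc μ x < (c : EReal)}
    rw [hnull] at hB0
    have hc20 : (0:ℝ) ≤ c₂ := le_of_lt (lt_trans hc0 hcc2)
    have hdimB : dimH B ≤ ENNReal.ofReal c₂ := by
      have h := dimH_le_of_hausdorffMeasure_ne_top (s := B) (d := c₂.toNNReal) (by
        rw [Real.coe_toNNReal c₂ hc20, hB0]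
        exact ENNReal.zero_ne_top)
      exact h
    have hμB : 0 < μ B :=
      lt_of_lt_of_le (pos_iff_ne_zero.mpr hA0) (measure_mono hAB)
    have hDm : dimHminus μ ≤ ENNReal.ofReal c₂ := by
      refine le_trans ?_ hdimB
      unfold dimHminus
      exact iInf_le_of_le B (iInf_le_of_le hBmeas (iInf_le_of_le hμB le_rfl))
    have hfin : ((dimHminus μ : ℝ≥0∞) : EReal) ≤ (c₂ : EReal) := by
      rw [← hcast hc20]
      exact EReal.coe_ennreal_le_coe_ennreal_iff.mpr hDm
    exact absurd (lt_of_le_of_lt hfin hc4) (lt_irrefl _)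
  -- claim C : coe (dimHplus) ≤ essSup
  have claimC : ((dimHplus μ : ℝ≥0∞) : EReal) ≤ essSup (dLoc μ) μ := by
    by_contra hlt
    push_neg at hlt
    obtain ⟨c, hc1, hc2⟩ := EReal.exists_between_coe_real hlt
    obtain ⟨c₂, hc3, hc4⟩ := EReal.exists_between_coe_real hc2
    have hc0 : (0:ℝ) < c := by
      have h := lt_of_le_of_lt hES0 hc1
      rw [← hzero, EReal.coe_lt_coe_iff] at h
      exact h
    have hcc2 : c < c₂ := EReal.coe_lt_coe_iff.mp hc3
    have hev : ∀ᵐ x ∂μ, dLoc μ x < (c : EReal) := by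
      rw [hESdef] at hc1
      exact eventually_lt_of_limsup_lt hc1
    have hAc : μ {x | ¬ (dLoc μ x < (c : EReal))} = 0 := ae_iff.mp hev
    have hnull := hausdorff_null_of_dLoc_lt μ hc0 hcc2
    obtain ⟨B, hAB, hBmeas, hB0⟩ :=
      MeasureTheory.exists_measurable_superset (μH[c₂]) {x | dLoc μ x < (c : EReal)}
    rw [hnull] at hB0
    have hc20 : (0:ℝ) ≤ c₂ := le_of_lt (lt_trans hc0 hcc2)
    have hdimB : dimH B ≤ ENNReal.ofReal c₂ := by
      have h := dimH_le_of_hausdorffMeasure_ne_top (s := B) (d := c₂.toNNReal) (by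
        rw [Real.coe_toNNReal c₂ hc20, hB0]
        exact ENNReal.zero_ne_top)
      exact h
    have hμBc : μ Bᶜ = 0 := by
      apply measure_mono_null _ hAc
      intro x hx
      exact fun h => hx (hAB h)
    have hDp : dimHplus μ ≤ ENNReal.ofReal c₂ := by
      refine le_trans ?_ hdimB
      unfold dimHplus
      exact iInf_le_of_le B (iInf_le_of_le hBmeas (iInf_le_of_le hμBc le_rfl))
    have hfin : ((dimHplus μ : ℝ≥0∞) : EReal) ≤ (c₂ : EReal) := by
      rw [← hcast hc20]
      exact EReal.coe_ennreal_le_coe_ennreal_iff.mpr hDp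
    exact absurd (lt_of_le_of_lt hfin hc4) (lt_irrefl _)
  -- claim B : essInf ≤ coe (dimHminus)
  have claimB : essInf (dLoc μ) μ ≤ ((dimHminus μ : ℝ≥0∞) : EReal) := by
    by_contra hlt
    push_neg at hlt
    obtain ⟨c, hc1, hc2⟩ := EReal.exists_between_coe_real hlt
    have hc0 : (0:ℝ) < c := by
      have h := lt_of_le_of_lt (EReal.coe_ennreal_nonneg (dimHminus μ)) hc1
      rw [← hzero, EReal.coe_lt_coe_iff] at h
      exact h
    have hDmlt : dimHminus μ < ENNReal.ofReal c := by
      rw [← hcast hc0.le] at hc1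
      exact EReal.coe_ennreal_lt_coe_ennreal_iff.mp hc1
    unfold dimHminus at hDmlt
    rw [iInf_lt_iff] at hDmlt
    obtain ⟨E, hDmlt⟩ := hDmlt
    rw [iInf_lt_iff] at hDmlt
    obtain ⟨hEmeas, hDmlt⟩ := hDmlt
    rw [iInf_lt_iff] at hDmlt
    obtain ⟨hEpos, hEdim⟩ := hDmlt
    have hae : ∀ᵐ x ∂μ, (c : EReal) < dLoc μ x := by
      rw [hEIdef] at hc2
      exact eventually_lt_of_lt_liminf hc2
    have hT : μ {x | ¬ ((c : EReal) < dLoc μ x)} = 0 := ae_iff.mp hae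
    have hpos : 0 < μ (E ∩ {x | (c : EReal) < dLoc μ x}) := by
      by_contra h
      push_neg at h
      have h0 : μ (E ∩ {x | (c : EReal) < dLoc μ x}) = 0 := le_antisymm h (zero_le)
      have h1 : μ (E \ {x | (c : EReal) < dLoc μ x}) = 0 :=
        measure_mono_null (fun x hx => hx.2) hT
      have := measure_le_inter_add_diff μ E {x | (c : EReal) < dLoc μ x}
      rw [h0, h1, add_zero] at this
      exact absurd (le_antisymm this (zero_le)) hEpos.ne'
    exact absurd (lt_of_le_of_lt (core_le_dimH μ hc0 hpos) hEdim) (lt_irrefl _)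
  -- claim D : essSup ≤ coe (dimHplus)
  have claimD : essSup (dLoc μ) μ ≤ ((dimHplus μ : ℝ≥0∞) : EReal) := by
    by_contra hlt
    push_neg at hlt
    obtain ⟨c, hc1, hc2⟩ := EReal.exists_between_coe_real hlt
    have hc0 : (0:ℝ) < c := by
      have h := lt_of_le_of_lt (EReal.coe_ennreal_nonneg (dimHplus μ)) hc1
      rw [← hzero, EReal.coe_lt_coe_iff] at h
      exact h
    have hDplt : dimHplus μ < ENNReal.ofReal c := by
      rw [← hcast hc0.le] at hc1
      exact EReal.coe_ennreal_lt_coe_ennreal_iff.mp hc1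
    unfold dimHplus at hDplt
    rw [iInf_lt_iff] at hDplt
    obtain ⟨E, hDplt⟩ := hDplt
    rw [iInf_lt_iff] at hDplt
    obtain ⟨hEmeas, hDplt⟩ := hDplt
    rw [iInf_lt_iff] at hDplt
    obtain ⟨hEc, hEdim⟩ := hDplt
    have hfreq : ∃ᶠ x in ae μ, (c : EReal) < dLoc μ x := by
      rw [hESdef] at hc2
      exact frequently_lt_of_lt_limsup (by isBoundedDefault) hc2
    have hT0 : μ {x | (c : EReal) < dLoc μ x} ≠ 0 := by
      intro h0
      have hev : ∀ᵐ x ∂μ, ¬ ((c : EReal) < dLoc μ x) := by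
        rw [ae_iff]; simpa using h0
      exact hfreq hev
    have hpos : 0 < μ (E ∩ {x | (c : EReal) < dLoc μ x}) := by
      by_contra h
      push_neg at h
      have h0 : μ (E ∩ {x | (c : EReal) < dLoc μ x}) = 0 := le_antisymm h (zero_le)
      have h1 : μ ({x | (c : EReal) < dLoc μ x} \ E) = 0 :=
        measure_mono_null (fun x hx => hx.2) hEc
      have h2 := measure_le_inter_add_diff μ {x | (c : EReal) < dLoc μ x} E
      rw [Set.inter_comm, h0, h1, add_zero] at h2
      exact hT0 (le_antisymm h2 (zero_le))
    exact absurd (lt_of_le_of_lt (core_le_dimH μ hc0 hpos) hEdim) (lt_irrefl _)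
  have heq1 : essInf (dLoc μ) μ = ((dimHminus μ : ℝ≥0∞) : EReal) := le_antisymm claimB claimA
  have heq2 : essSup (dLoc μ) μ = ((dimHplus μ : ℝ≥0∞) : EReal) := le_antisymm claimD claimC
  refine ⟨heq1, heq2, ?_⟩
  apply EReal.coe_ennreal_le_coe_ennreal_iff.mp
  rw [← heq1, ← heq2]
  exact hIleS
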